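/- Set-cover strategy loss bound (inequality (9)): let V* ⊆ 𝒱 be a set cover with |V*| = n* and b_1 ≤ n*, and let σ_1^ε be any mixed strategy of Player 1 whose marginals satisfy ρ_{σ_1^ε}(v) = b_1/n* for v ∈ V* and ρ_{σ_1^ε}(v) = 0 for v ∉ V*. Then for every mixed attack strategy σ_2, L(σ_1^ε, σ_2) ≤ w_max (n* − b_1)/n*, where w_max = max_{e∈ℰ} w_e. -/

import Mathlib

open Finset

namespace Stmt13

/-- Expected loss `L(σ₁, σ₂)` of the monitoring game. -/
noncomputable def eLoss {V E : Type*} [Fintype V] [Fintype E] [DecidableEq E]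
    (M : V → Finset E) (w : E → ℝ) (σ1 : Finset V → ℝ) (σ2 : E → ℝ) : ℝ :=
  ∑ S : Finset V, ∑ e : E, σ1 S * σ2 e * (if e ∈ S.biUnion M then 0 else w e)

/-- inequality (9): If `V*` is a set cover with `|V*| = n*`, `b₁ ≤ n*`,
and `σ₁^ε` is any mixed strategy of Player 1 whose marginals equal `b₁/n*` on `V*` and
`0` off `V*`, then for every mixed attack strategy `σ₂`,
`L(σ₁^ε, σ₂) ≤ w_max (n* − b₁)/n*`. -/
theorem stmt13 {V E : Type*} [Fintype V] [DecidableEq V] [Fintype E] [DecidableEq E]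
    [Nonempty E]
    (M : V → Finset E) (hMne : ∀ v, (M v).Nonempty)
    (hcov : ∀ e : E, ∃ v, e ∈ M v)
    (w : E → ℝ) (hw : ∀ e, 0 < w e ∧ w e ≤ 1)
    (b1 : ℕ)
    (Vstar : Finset V) (hVcover : Vstar.biUnion M = Finset.univ)
    (nstar : ℕ) (hn : nstar = Vstar.card) (hbn : b1 ≤ nstar)
    (σ1 : Finset V → ℝ)
    (hσ1nn : ∀ S, 0 ≤ σ1 S) (hσ1sum : ∑ S : Finset V, σ1 S = 1)
    (hσ1card : ∀ S : Finset V, σ1 S ≠ 0 → S.card ≤ b1)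
    (hmarg : ∀ v : V, (∑ S : Finset V, if v ∈ S then σ1 S else 0) =
      if v ∈ Vstar then (b1 : ℝ) / nstar else 0) :
    ∀ σ2 : E → ℝ, (∀ e, 0 ≤ σ2 e) → (∑ e : E, σ2 e = 1) →
      eLoss M w σ1 σ2 ≤
        (Finset.univ.sup' Finset.univ_nonempty w) * (((nstar : ℝ) - b1) / nstar) := by
  intro σ2 hσ2 hσ2sum
  have hVne : Vstar.Nonempty := by
    rcases Finset.univ_nonempty (α := E) with ⟨e, _⟩
    have : e ∈ Vstar.biUnion M := by rw [hVcover]; exact Finset.mem_univ e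
    rcases Finset.mem_biUnion.mp this with ⟨v, hv, _⟩
    exact ⟨v, hv⟩
  have hn0 : 0 < nstar := by rw [hn]; exact Finset.card_pos.mpr hVne
  have hnR : (0:ℝ) < nstar := by exact_mod_cast hn0
  set wmax := Finset.univ.sup' Finset.univ_nonempty w with hwmax
  set c : ℝ := 1 - (b1:ℝ)/nstar with hc
  have hc0 : 0 ≤ c := by
    have : (b1:ℝ)/nstar ≤ 1 := by
      rw [div_le_one hnR]; exact_mod_cast hbn
    simp only [hc]; linarith
  have hwm0 : 0 ≤ wmax := by
    rcases Finset.univ_nonempty (α := E) with ⟨e, _⟩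
    exact le_trans (hw e).1.le (Finset.le_sup' w (Finset.mem_univ e))
  have key : ∀ e : E, (∑ S : Finset V, σ1 S * σ2 e * (if e ∈ S.biUnion M then 0 else w e))
      ≤ σ2 e * wmax * c := by
    intro e
    have he : e ∈ Vstar.biUnion M := by rw [hVcover]; exact Finset.mem_univ e
    rcases Finset.mem_biUnion.mp he with ⟨v, hvV, hev⟩
    have step1 : (∑ S : Finset V, σ1 S * σ2 e * (if e ∈ S.biUnion M then 0 else w e))
        ≤ ∑ S : Finset V, σ2 e * w e * (σ1 S - (if v ∈ S then σ1 S else 0)) := by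
      apply Finset.sum_le_sum
      intro S _
      by_cases hvS : v ∈ S
      · have hmem : e ∈ S.biUnion M := Finset.mem_biUnion.mpr ⟨v, hvS, hev⟩
        simp [hmem, hvS]
      · by_cases heS : e ∈ S.biUnion M
        · simp only [heS, if_pos, hvS, if_neg, not_false_iff]
          have : (0:ℝ) ≤ σ2 e * w e * (σ1 S - 0) := by
            rw [sub_zero]; exact mul_nonneg (mul_nonneg (hσ2 e) (hw e).1.le) (hσ1nn S)
          simpa using this
        · simp only [heS, if_neg, hvS, not_false_iff, sub_zero]
          ring_nf
          exact le_refl _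
    have step2 : (∑ S : Finset V, σ2 e * w e * (σ1 S - (if v ∈ S then σ1 S else 0)))
        = σ2 e * w e * c := by
      rw [← Finset.mul_sum, Finset.sum_sub_distrib, hσ1sum, hmarg v, if_pos hvV]
    have step3 : σ2 e * w e * c ≤ σ2 e * wmax * c := by
      apply mul_le_mul_of_nonneg_right _ hc0
      exact mul_le_mul_of_nonneg_left (Finset.le_sup' w (Finset.mem_univ e)) (hσ2 e)
    calc _ ≤ _ := step1
      _ = _ := step2
      _ ≤ _ := step3
  have hfinal : eLoss M w σ1 σ2 ≤ wmax * c := by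
    rw [eLoss, Finset.sum_comm]
    calc (∑ e : E, ∑ S : Finset V, σ1 S * σ2 e * (if e ∈ S.biUnion M then 0 else w e))
        ≤ ∑ e : E, σ2 e * wmax * c := Finset.sum_le_sum (fun e _ => key e)
      _ = wmax * c := by
          rw [← Finset.sum_mul, ← Finset.sum_mul, hσ2sum, one_mul]
  have hceq : c = ((nstar : ℝ) - b1) / nstar := by
    rw [hc, sub_div, div_self hnR.ne']
  rw [← hceq]
  exact hfinal

end Stmt13
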